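/- As formal power series (or for |q| < 1 and |z| < 1), Σ_{l≥0} ((a;q)_l / (q;q)_l) z^l = (az;q)_∞ / (z;q)_∞. -/

import Mathlib

open scoped BigOperators
open Filter Topology

/-- The finite q-Pochhammer symbol `(a;q)_n`. -/
noncomputable def qPoch (a q : ℂ) : ℕ → ℂ
  | 0 => 1
  | n + 1 => qPoch a q n * (1 - a * q ^ n)

/-- The infinite q-Pochhammer symbol `(a;q)_∞`. -/
noncomputable def qPochInf (a q : ℂ) : ℂ := ∏' i : ℕ, (1 - a * q ^ i)

lemma qb_factor_ne_zero {w q : ℂ} (hq : ‖q‖ < 1) (hw : ‖w‖ < 1) (i : ℕ) :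
    1 - w * q ^ i ≠ 0 := by
  intro h
  have h1 : w * q ^ i = 1 := by linear_combination -h
  have : ‖w * q ^ i‖ < 1 := by
    rw [norm_mul, norm_pow]
    calc ‖w‖ * ‖q‖ ^ i ≤ ‖w‖ * 1 := by
          gcongr
          exact pow_le_one₀ (norm_nonneg q) hq.le
      _ < 1 := by simpa using hw
  rw [h1] at this; simp at this

lemma qb_summable_log {q w : ℂ} (hq : ‖q‖ < 1) (hw : ‖w‖ < 1) :
    Summable (fun i : ℕ => Complex.log (1 - w * q ^ i)) := by
  refine Summable.of_norm_bounded
    (g := fun i => (‖w‖ * (1 - ‖w‖)⁻¹ / 2 + 1) * (‖w‖ * ‖q‖ ^ i)) ?_ ?_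
  · exact ((summable_geometric_of_lt_one (norm_nonneg q) hq).mul_left _).mul_left _
  · intro i
    have hwi : ‖-(w * q ^ i)‖ ≤ ‖w‖ := by
      rw [norm_neg, norm_mul, norm_pow]
      calc ‖w‖ * ‖q‖ ^ i ≤ ‖w‖ * 1 := by
            gcongr; exact pow_le_one₀ (norm_nonneg q) hq.le
        _ = ‖w‖ := mul_one _
    have hwi1 : ‖-(w * q ^ i)‖ < 1 := lt_of_le_of_lt hwi hw
    have := Complex.norm_log_one_add_le hwi1
    have heq : (1 : ℂ) + -(w * q ^ i) = 1 - w * q ^ i := by ring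
    rw [heq] at this
    refine this.trans ?_
    have hn : ‖-(w * q ^ i)‖ = ‖w‖ * ‖q‖ ^ i := by rw [norm_neg, norm_mul, norm_pow]
    rw [hn]
    have h1 : (1 - ‖w‖ * ‖q‖ ^ i)⁻¹ ≤ (1 - ‖w‖)⁻¹ := by
      apply inv_anti₀
      · linarith
      · nlinarith [hwi, hn, norm_nonneg (-(w * q ^ i))]
    have h2 : ‖w‖ * ‖q‖ ^ i ≤ ‖w‖ := by rw [← hn]; exact hwi
    have ht0 : 0 ≤ ‖w‖ * ‖q‖ ^ i := mul_nonneg (norm_nonneg w) (pow_nonneg (norm_nonneg q) i)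
    have hA0 : (0:ℝ) ≤ (1 - ‖w‖ * ‖q‖ ^ i)⁻¹ := by
      apply inv_nonneg.mpr; nlinarith
    have key : (‖w‖ * ‖q‖ ^ i) ^ 2 * (1 - ‖w‖ * ‖q‖ ^ i)⁻¹ ≤
        (‖w‖ * ‖q‖ ^ i) * (‖w‖ * (1 - ‖w‖)⁻¹) := by
      have : (‖w‖ * ‖q‖ ^ i) ^ 2 * (1 - ‖w‖ * ‖q‖ ^ i)⁻¹ =
          ((‖w‖ * ‖q‖ ^ i) * (‖w‖ * ‖q‖ ^ i)) * (1 - ‖w‖ * ‖q‖ ^ i)⁻¹ := by ring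
      rw [this, mul_assoc]
      apply mul_le_mul_of_nonneg_left _ ht0
      exact mul_le_mul h2 h1 hA0 (norm_nonneg w)
    nlinarith

lemma qb_multipliable_small {q w : ℂ} (hq : ‖q‖ < 1) (hw : ‖w‖ < 1) :
    Multipliable (fun i : ℕ => 1 - w * q ^ i) :=
  Complex.multipliable_of_summable_log (qb_summable_log hq hw)

lemma qb_qPochInf_ne_zero {q w : ℂ} (hq : ‖q‖ < 1) (hw : ‖w‖ < 1) :
    qPochInf w q ≠ 0 := by
  have h2 := Complex.cexp_tsum_eq_tprod (f := fun n => 1 - w * q ^ n)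
    (fun n => qb_factor_ne_zero hq hw n) (qb_summable_log hq hw)
  rw [qPochInf]
  rw [← h2]
  exact Complex.exp_ne_zero _

lemma qb_multipliable {q : ℂ} (hq : ‖q‖ < 1) (w : ℂ) :
    Multipliable (fun i : ℕ => 1 - w * q ^ i) := by
  obtain ⟨N, hN⟩ : ∃ N : ℕ, ‖w‖ * ‖q‖ ^ N < 1 := by
    have := (tendsto_pow_atTop_nhds_zero_of_lt_one (norm_nonneg q) hq).const_mul ‖w‖
    rw [mul_zero] at this
    have := this.eventually (eventually_lt_nhds one_pos)
    exact this.exists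
  apply Multipliable.comp_nat_add (k := N)
  have hwq : ‖w * q ^ N‖ < 1 := by rwa [norm_mul, norm_pow]
  have := qb_multipliable_small hq hwq
  refine this.congr fun i => ?_
  rw [pow_add]; ring

lemma qb_qPoch_norm_le (a q : ℂ) (hq : ‖q‖ < 1) (l : ℕ) :
    ‖qPoch a q l‖ ≤ Real.exp (‖a‖ * (1 - ‖q‖)⁻¹) := by
  have hq0 : (0:ℝ) ≤ ‖q‖ := norm_nonneg q
  have hgeom : ∀ n : ℕ, ∑ i ∈ Finset.range n, ‖a‖ * ‖q‖ ^ i ≤ ‖a‖ * (1 - ‖q‖)⁻¹ := by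
    intro n
    rw [← Finset.mul_sum]
    apply mul_le_mul_of_nonneg_left _ (norm_nonneg a)
    rw [← tsum_geometric_of_lt_one hq0 hq]
    exact Summable.sum_le_tsum _ (fun i _ => pow_nonneg hq0 i)
      (summable_geometric_of_lt_one hq0 hq)
  have main : ∀ l : ℕ, ‖qPoch a q l‖ ≤ Real.exp (∑ i ∈ Finset.range l, ‖a‖ * ‖q‖ ^ i) := by
    intro l
    induction l with
    | zero => simp [qPoch]
    | succ l ih =>
      rw [qPoch, norm_mul, Finset.sum_range_succ, Real.exp_add]
      have h1 : ‖1 - a * q ^ l‖ ≤ 1 + ‖a‖ * ‖q‖ ^ l := by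
        calc ‖1 - a * q ^ l‖ ≤ ‖(1:ℂ)‖ + ‖a * q ^ l‖ := norm_sub_le _ _
          _ = 1 + ‖a‖ * ‖q‖ ^ l := by rw [norm_one, norm_mul, norm_pow]
      have h2 : 1 + ‖a‖ * ‖q‖ ^ l ≤ Real.exp (‖a‖ * ‖q‖ ^ l) := by
        have := Real.add_one_le_exp (‖a‖ * ‖q‖ ^ l); linarith
      exact mul_le_mul ih (h1.trans h2) (norm_nonneg _) (Real.exp_nonneg _)
  exact (main l).trans (Real.exp_le_exp.mpr (hgeom l))

lemma qb_qPoch_q_norm_ge {q : ℂ} (hq : ‖q‖ < 1) (l : ℕ) :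
    Real.exp (-(‖q‖ * (1 - ‖q‖)⁻¹ * (1 - ‖q‖)⁻¹)) ≤ ‖qPoch q q l‖ := by
  have hq0 : (0:ℝ) ≤ ‖q‖ := norm_nonneg q
  have hq1 : (0:ℝ) < 1 - ‖q‖ := by linarith
  have hgeom : ∀ n : ℕ, ∑ i ∈ Finset.range n, ‖q‖ ^ (i+1) * (1 - ‖q‖)⁻¹ ≤
      ‖q‖ * (1 - ‖q‖)⁻¹ * (1 - ‖q‖)⁻¹ := by
    intro n
    rw [← Finset.sum_mul]
    apply mul_le_mul_of_nonneg_right _ (inv_nonneg.mpr hq1.le)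
    have : ∀ i : ℕ, ‖q‖ ^ (i+1) = ‖q‖ * ‖q‖ ^ i := fun i => pow_succ' _ _
    simp_rw [this]
    rw [← Finset.mul_sum]
    apply mul_le_mul_of_nonneg_left _ hq0
    rw [← tsum_geometric_of_lt_one hq0 hq]
    exact Summable.sum_le_tsum _ (fun i _ => pow_nonneg hq0 i)
      (summable_geometric_of_lt_one hq0 hq)
  have main : ∀ l : ℕ,
      Real.exp (-(∑ i ∈ Finset.range l, ‖q‖ ^ (i+1) * (1 - ‖q‖)⁻¹)) ≤ ‖qPoch q q l‖ := by
    intro l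
    induction l with
    | zero => simp [qPoch]
    | succ l ih =>
      rw [qPoch, norm_mul, Finset.sum_range_succ, neg_add, Real.exp_add]
      have hfac : Real.exp (-(‖q‖ ^ (l+1) * (1 - ‖q‖)⁻¹)) ≤ ‖1 - q * q ^ l‖ := by
        set x : ℝ := ‖q‖ ^ (l+1) with hxdef
        have hx0 : 0 ≤ x := pow_nonneg hq0 _
        have hxq : x ≤ ‖q‖ := by
          have := pow_le_pow_of_le_one hq0 hq.le (Nat.one_le_iff_ne_zero.mpr (Nat.succ_ne_zero l))
          simpa using this
        have hx1 : x < 1 := lt_of_le_of_lt hxq hq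
        have hnorm : 1 - x ≤ ‖1 - q * q ^ l‖ := by
          have h1 : ‖q * q ^ l‖ = x := by rw [← pow_succ', norm_pow]
          have := norm_sub_norm_le (1 : ℂ) (q * q ^ l)
          rw [norm_one, h1] at this
          exact this
        refine le_trans ?_ hnorm
        have e1 : (1 - x)⁻¹ ≤ Real.exp (x * (1 - ‖q‖)⁻¹) := by
          have e2 : x * (1 - x)⁻¹ ≤ x * (1 - ‖q‖)⁻¹ := by
            apply mul_le_mul_of_nonneg_left _ hx0
            apply inv_anti₀ hq1
            linarith
          have hxne : (1:ℝ) - x ≠ 0 := by linarith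
          have e3 : (1 - x)⁻¹ = 1 + x * (1 - x)⁻¹ := by
            have h := mul_inv_cancel₀ hxne
            linear_combination h
          have e4 := Real.add_one_le_exp (x * (1 - ‖q‖)⁻¹)
          linarith
        rw [Real.exp_neg]
        have hepos : 0 < Real.exp (x * (1 - ‖q‖)⁻¹) := Real.exp_pos _
        rw [inv_le_comm₀ hepos (by linarith : (0:ℝ) < 1 - x)]
        exact e1
      exact mul_le_mul ih hfac (Real.exp_nonneg _) (norm_nonneg _)
  refine le_trans ?_ (main l)
  rw [Real.exp_le_exp, neg_le_neg_iff]
  exact hgeom l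

lemma qb_qPoch_q_ne_zero {q : ℂ} (hq : ‖q‖ < 1) (l : ℕ) : qPoch q q l ≠ 0 := by
  have := qb_qPoch_q_norm_ge hq l
  have h := (Real.exp_pos _).trans_le this
  intro h0
  rw [h0, norm_zero] at h
  exact lt_irrefl _ h

lemma qb_coeff_bound (a q : ℂ) (hq : ‖q‖ < 1) :
    ∃ M : ℝ, 0 < M ∧ ∀ l, ‖qPoch a q l / qPoch q q l‖ ≤ M := by
  refine ⟨Real.exp (‖a‖ * (1 - ‖q‖)⁻¹) / Real.exp (-(‖q‖ * (1 - ‖q‖)⁻¹ * (1 - ‖q‖)⁻¹)),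
    div_pos (Real.exp_pos _) (Real.exp_pos _), fun l => ?_⟩
  rw [norm_div]
  exact div_le_div₀ (Real.exp_nonneg _) (qb_qPoch_norm_le a q hq l) (Real.exp_pos _)
    (qb_qPoch_q_norm_ge hq l)

lemma qb_summable (a q : ℂ) (hq : ‖q‖ < 1) {w : ℂ} (hw : ‖w‖ < 1) :
    Summable (fun l : ℕ => qPoch a q l / qPoch q q l * w ^ l) := by
  obtain ⟨M, hM0, hM⟩ := qb_coeff_bound a q hq
  refine Summable.of_norm_bounded (g := fun l => M * ‖w‖ ^ l)
    ((summable_geometric_of_lt_one (norm_nonneg w) hw).mul_left M) (fun l => ?_)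
  rw [norm_mul, norm_pow]
  exact mul_le_mul_of_nonneg_right (hM l) (pow_nonneg (norm_nonneg w) l)

lemma qb_F_sub_one (a q : ℂ) (hq : ‖q‖ < 1) {M : ℝ}
    (hM : ∀ l, ‖qPoch a q l / qPoch q q l‖ ≤ M) {w : ℂ} (hw : ‖w‖ < 1) :
    ‖(∑' l : ℕ, qPoch a q l / qPoch q q l * w ^ l) - 1‖ ≤ M * ‖w‖ * (1 - ‖w‖)⁻¹ := by
  have S := qb_summable a q hq hw
  rw [Summable.tsum_eq_zero_add S]
  have h0 : qPoch a q 0 / qPoch q q 0 * w ^ 0 = 1 := by simp [qPoch]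
  rw [h0, add_sub_cancel_left]
  refine tsum_of_norm_bounded
    ((hasSum_geometric_of_lt_one (norm_nonneg w) hw).mul_left (M * ‖w‖)) (fun l => ?_)
  rw [norm_mul, norm_pow]
  calc ‖qPoch a q (l+1) / qPoch q q (l+1)‖ * ‖w‖ ^ (l+1) ≤ M * ‖w‖ ^ (l+1) :=
        mul_le_mul_of_nonneg_right (hM _) (pow_nonneg (norm_nonneg w) _)
    _ = M * ‖w‖ * ‖w‖ ^ l := by rw [pow_succ']; ring

lemma qb_rec (a q : ℂ) (hq : ‖q‖ < 1) (l : ℕ) :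
    qPoch a q (l+1) / qPoch q q (l+1) * (1 - q ^ (l+1)) =
      qPoch a q l / qPoch q q l * (1 - a * q ^ l) := by
  have hB : qPoch q q l ≠ 0 := qb_qPoch_q_ne_zero hq l
  have hfac : (1 : ℂ) - q * q ^ l ≠ 0 := by
    have := qb_qPoch_q_ne_zero hq (l+1)
    rw [qPoch] at this
    exact right_ne_zero_of_mul this
  have hpow : (1 : ℂ) - q ^ (l+1) = 1 - q * q ^ l := by rw [pow_succ']
  rw [qPoch, qPoch, hpow]
  rw [div_mul_eq_mul_div, div_mul_eq_mul_div, div_eq_div_iff (mul_ne_zero hB hfac) hB]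
  ring

lemma qb_funEq (a q : ℂ) (hq : ‖q‖ < 1) {w : ℂ} (hw : ‖w‖ < 1) :
    (1 - w) * (∑' l : ℕ, qPoch a q l / qPoch q q l * w ^ l) =
      (1 - a * w) * (∑' l : ℕ, qPoch a q l / qPoch q q l * (q * w) ^ l) := by
  have hqw : ‖q * w‖ < 1 := by
    rw [norm_mul]
    calc ‖q‖ * ‖w‖ ≤ 1 * ‖w‖ := mul_le_mul_of_nonneg_right hq.le (norm_nonneg w)
      _ = ‖w‖ := one_mul _
      _ < 1 := hw
  have S1 : Summable (fun l : ℕ => qPoch a q l / qPoch q q l * w ^ l) := qb_summable a q hq hw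
  have S2 : Summable (fun l : ℕ => qPoch a q l / qPoch q q l * (q * w) ^ l) :=
    qb_summable a q hq hqw
  have hfs : Summable (fun l : ℕ =>
      qPoch a q l / qPoch q q l * w ^ l - qPoch a q l / qPoch q q l * (q * w) ^ l) := S1.sub S2
  have hstep : ∀ l : ℕ,
      qPoch a q (l+1) / qPoch q q (l+1) * w ^ (l+1) -
        qPoch a q (l+1) / qPoch q q (l+1) * (q * w) ^ (l+1) =
      w * (qPoch a q l / qPoch q q l * w ^ l) -
        (a * w) * (qPoch a q l / qPoch q q l * (q * w) ^ l) := by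
    intro l
    have hr := qb_rec a q hq l
    have h1 : qPoch a q (l+1) / qPoch q q (l+1) * w ^ (l+1) -
        qPoch a q (l+1) / qPoch q q (l+1) * (q * w) ^ (l+1) =
        (qPoch a q (l+1) / qPoch q q (l+1) * (1 - q ^ (l+1))) * w ^ (l+1) := by
      rw [mul_pow]; ring
    rw [h1, hr, mul_pow, pow_succ']
    ring
  have key : ∑' l : ℕ,
      (qPoch a q l / qPoch q q l * w ^ l - qPoch a q l / qPoch q q l * (q * w) ^ l) =
      w * (∑' l : ℕ, qPoch a q l / qPoch q q l * w ^ l) -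
        (a * w) * (∑' l : ℕ, qPoch a q l / qPoch q q l * (q * w) ^ l) := by
    rw [Summable.tsum_eq_zero_add hfs]
    have hf0 : qPoch a q 0 / qPoch q q 0 * w ^ 0 -
        qPoch a q 0 / qPoch q q 0 * (q * w) ^ 0 = 0 := by simp
    rw [hf0, zero_add]
    calc ∑' l : ℕ, (qPoch a q (l+1) / qPoch q q (l+1) * w ^ (l+1) -
          qPoch a q (l+1) / qPoch q q (l+1) * (q * w) ^ (l+1))
        = ∑' l : ℕ, (w * (qPoch a q l / qPoch q q l * w ^ l) -
            (a * w) * (qPoch a q l / qPoch q q l * (q * w) ^ l)) := tsum_congr hstep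
      _ = ∑' l : ℕ, w * (qPoch a q l / qPoch q q l * w ^ l) -
            ∑' l : ℕ, (a * w) * (qPoch a q l / qPoch q q l * (q * w) ^ l) :=
          Summable.tsum_sub (S1.mul_left w) (S2.mul_left (a * w))
      _ = _ := by rw [tsum_mul_left, tsum_mul_left]
  have key2 : ∑' l : ℕ,
      (qPoch a q l / qPoch q q l * w ^ l - qPoch a q l / qPoch q q l * (q * w) ^ l) =
      (∑' l : ℕ, qPoch a q l / qPoch q q l * w ^ l) -
        (∑' l : ℕ, qPoch a q l / qPoch q q l * (q * w) ^ l) := Summable.tsum_sub S1 S2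
  linear_combination key - key2

lemma qb_iterate (a q z : ℂ) (hq : ‖q‖ < 1) (hz : ‖z‖ < 1) (n : ℕ) :
    (∏ i ∈ Finset.range n, (1 - z * q ^ i)) *
        (∑' l : ℕ, qPoch a q l / qPoch q q l * z ^ l) =
      (∏ i ∈ Finset.range n, (1 - a * z * q ^ i)) *
        (∑' l : ℕ, qPoch a q l / qPoch q q l * (q ^ n * z) ^ l) := by
  induction n with
  | zero => simp
  | succ n ih =>
    have hw : ‖q ^ n * z‖ < 1 := by
      rw [norm_mul, norm_pow]
      calc ‖q‖ ^ n * ‖z‖ ≤ 1 * ‖z‖ :=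
            mul_le_mul_of_nonneg_right (pow_le_one₀ (norm_nonneg q) hq.le) (norm_nonneg z)
        _ = ‖z‖ := one_mul _
        _ < 1 := hz
    have e1 := qb_funEq a q hq hw
    have e2 : q * (q ^ n * z) = q ^ (n+1) * z := by ring
    rw [e2] at e1
    rw [Finset.prod_range_succ, Finset.prod_range_succ]
    linear_combination (1 - z * q ^ n) * ih + (∏ i ∈ Finset.range n, (1 - a * z * q ^ i)) * e1

/-- The q-binomial theorem. -/
theorem stmt2 (a q z : ℂ) (hq : ‖q‖ < 1) (hz : ‖z‖ < 1) :
    ∑' l : ℕ, (qPoch a q l / qPoch q q l) * z ^ l =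
      qPochInf (a * z) q / qPochInf z q := by
  have hP : Tendsto (fun n => ∏ i ∈ Finset.range n, (1 - a * z * q ^ i)) atTop
      (𝓝 (qPochInf (a * z) q)) := (qb_multipliable hq (a * z)).hasProd.tendsto_prod_nat
  have hQ : Tendsto (fun n => ∏ i ∈ Finset.range n, (1 - z * q ^ i)) atTop
      (𝓝 (qPochInf z q)) := (qb_multipliable hq z).hasProd.tendsto_prod_nat
  have hQne : qPochInf z q ≠ 0 := qb_qPochInf_ne_zero hq hz
  obtain ⟨M, hM0, hM⟩ := qb_coeff_bound a q hq
  have hz1 : (0:ℝ) < 1 - ‖z‖ := by linarith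
  have hFlim : Tendsto (fun n => ∑' l : ℕ, qPoch a q l / qPoch q q l * (q ^ n * z) ^ l)
      atTop (𝓝 1) := by
    rw [tendsto_iff_norm_sub_tendsto_zero]
    apply squeeze_zero (fun n => norm_nonneg _)
      (g := fun n => (M * ‖z‖ * (1 - ‖z‖)⁻¹) * ‖q‖ ^ n)
    · intro n
      have hwn : ‖q ^ n * z‖ = ‖q‖ ^ n * ‖z‖ := by rw [norm_mul, norm_pow]
      have hwz : ‖q ^ n * z‖ ≤ ‖z‖ := by
        rw [hwn]
        calc ‖q‖ ^ n * ‖z‖ ≤ 1 * ‖z‖ :=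
              mul_le_mul_of_nonneg_right (pow_le_one₀ (norm_nonneg q) hq.le) (norm_nonneg z)
          _ = ‖z‖ := one_mul _
      have hw1 : ‖q ^ n * z‖ < 1 := lt_of_le_of_lt hwz hz
      refine (qb_F_sub_one a q hq hM hw1).trans ?_
      have hinv : (1 - ‖q ^ n * z‖)⁻¹ ≤ (1 - ‖z‖)⁻¹ := by
        apply inv_anti₀ hz1
        linarith
      calc M * ‖q ^ n * z‖ * (1 - ‖q ^ n * z‖)⁻¹
          ≤ M * ‖q ^ n * z‖ * (1 - ‖z‖)⁻¹ := by
            apply mul_le_mul_of_nonneg_left hinv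
            exact mul_nonneg hM0.le (norm_nonneg _)
        _ = M * ‖z‖ * (1 - ‖z‖)⁻¹ * ‖q‖ ^ n := by rw [hwn]; ring
    · have := (tendsto_pow_atTop_nhds_zero_of_lt_one (norm_nonneg q) hq).const_mul
        (M * ‖z‖ * (1 - ‖z‖)⁻¹)
      simpa using this
  have h1 : Tendsto (fun n => (∏ i ∈ Finset.range n, (1 - z * q ^ i)) *
      (∑' l : ℕ, qPoch a q l / qPoch q q l * z ^ l)) atTop
      (𝓝 (qPochInf z q * ∑' l : ℕ, qPoch a q l / qPoch q q l * z ^ l)) := hQ.mul_const _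
  have h2 : Tendsto (fun n => (∏ i ∈ Finset.range n, (1 - a * z * q ^ i)) *
      (∑' l : ℕ, qPoch a q l / qPoch q q l * (q ^ n * z) ^ l)) atTop
      (𝓝 (qPochInf (a * z) q * 1)) := hP.mul hFlim
  have heq : qPochInf z q * (∑' l : ℕ, qPoch a q l / qPoch q q l * z ^ l) =
      qPochInf (a * z) q * 1 :=
    tendsto_nhds_unique (h1.congr (fun n => qb_iterate a q z hq hz n)) h2
  rw [eq_div_iff hQne]
  linear_combination heq
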